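/- Lemma A.3, Switch_{1n} case: let n ≥ 4 be even and x, y ∈ (ℝ_{>0})^n (indices modulo n). Let ī denote the involution pairing (n,1), (2,3), (4,5), …, (n−2,n−1), i.e. ī = i−1 for i odd and ī = i+1 for i even (so 1̄ = n and n̄ = 1). Set α_i = x_i + y_ī, x**_i = x_ī·α_{ī+1}/α_ī and y**_i = y_ī·α_{i+1}/α_i. Then Q_i(x**, y**) = Q_i(x,y) for every odd i, and Q_i(x**, y**) = (x_{i+1}+y_i)·(x_i·Q_{i+1}(x,y) + y_{i+1}·Q_{i−1}(x,y)) / ((x_i+y_{i+1})·(x_{i+2}+y_{i+3})) for every even i. -/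

import Mathlib

/- Tropical (geometric-lift) setting for the combinatorial R- and K-matrices of
Kuniba–Okado–Yamada, "Box-Ball System with Reflecting End", Appendix A.
Vectors are real-valued, indexed by `ZMod n` (coordinates modulo `n`), and
`Qr x y i` is the subtraction-free polynomial
`Q_i(x,y) = Σ_{k=1}^{n} (Π_{j=1}^{k−1} x_{i+j}) (Π_{j=k+1}^{n} y_{i+j})`,
the geometric lift (by `(min,+) → (+,×)`) of the piecewise-linear energy. -/

namespace BBST

abbrev W (n : ℕ) := ZMod n → ℝ

variable {n : ℕ}

/-- The tropical energy polynomial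
`Q_i(x,y) = Σ_{k=1}^{n} (Π_{j=1}^{k−1} x_{i+j}) · (Π_{j=k+1}^{n} y_{i+j})`. -/
def Qr (x y : W n) (i : ZMod n) : ℝ :=
  ∑ k ∈ Finset.range n,
    (∏ j ∈ Finset.range k, x (i + (j : ZMod n) + 1)) *
      ∏ j ∈ Finset.Ico (k + 1) n, y (i + (j : ZMod n) + 1)

end BBST

namespace BBST

variable {n : ℕ}

lemma prod_shift [NeZero n] (f : ZMod n → ℝ) (i : ZMod n) :
    ∏ k ∈ Finset.range n, f (i + (k : ZMod n)) = ∏ j, f j := by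
  refine Finset.prod_nbij' (fun k => i + (k : ZMod n)) (fun j => (j - i).val)
    (fun k _ => Finset.mem_univ _) (fun j _ => Finset.mem_range.2 (ZMod.val_lt _))
    ?_ ?_ (fun k _ => rfl)
  · intro k hk
    simp only [add_sub_cancel_left]
    exact ZMod.val_cast_of_lt (Finset.mem_range.1 hk)
  · intro j _
    simp [ZMod.natCast_val, ZMod.cast_id]

lemma Qr_rec [NeZero n] (x y : W n) (i : ZMod n) :
    x (i+1) * Qr x y (i+1) + ∏ j, y j = y (i+1) * Qr x y i + ∏ j, x j := by
  obtain ⟨m, rfl⟩ : ∃ m, n = m + 1 :=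
    ⟨n - 1, (Nat.succ_pred_eq_of_ne_zero (NeZero.ne n)).symm⟩
  -- abbreviations
  have hm1 : ((m : ℕ) : ZMod (m+1)) = -1 := by
    have : (((m+1) : ℕ) : ZMod (m+1)) = 0 := ZMod.natCast_self (m+1)
    push_cast at this ⊢
    linear_combination this
  -- key termwise identity
  have key : ∀ k ∈ Finset.range m,
      y (i+1) * ((∏ j ∈ Finset.range (k+1), x (i + (j : ZMod (m+1)) + 1)) *
        ∏ j ∈ Finset.Ico (k+1+1) (m+1), y (i + (j : ZMod (m+1)) + 1))
      = x (i+1) * ((∏ j ∈ Finset.range k, x ((i+1) + (j : ZMod (m+1)) + 1)) *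
        ∏ j ∈ Finset.Ico (k+1) (m+1), y ((i+1) + (j : ZMod (m+1)) + 1)) := by
    intro k hk
    have hk' : k < m := Finset.mem_range.1 hk
    have hx1 : (∏ j ∈ Finset.range (k+1), x (i + (j : ZMod (m+1)) + 1))
        = x (i+1) * ∏ j ∈ Finset.range k, x ((i+1) + (j : ZMod (m+1)) + 1) := by
      rw [Finset.prod_range_succ']
      rw [mul_comm]
      congr 1
      · simp
      · apply Finset.prod_congr rfl
        intro j _
        congr 1
        push_cast
        ring
    have hy1 : (∏ j ∈ Finset.Ico (k+1) (m+1), y ((i+1) + (j : ZMod (m+1)) + 1))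
        = (∏ j ∈ Finset.Ico (k+1+1) (m+1), y (i + (j : ZMod (m+1)) + 1)) * y (i+1) := by
      rw [Finset.prod_Ico_eq_prod_range, Finset.prod_Ico_eq_prod_range]
      have hmk : (m+1) - (k+1) = ((m+1) - (k+1+1)) + 1 := by omega
      rw [hmk, Finset.prod_range_succ]
      congr 1
      · apply Finset.prod_congr rfl
        intro l _
        congr 1
        push_cast
        ring
      · congr 1
        have h1 : k + 1 + ((m+1) - (k+1+1)) = m := by omega
        rw [h1, hm1]
        ring
    rw [hx1, hy1]
    ring
  -- boundary terms
  have bY : y (i+1) * ((∏ j ∈ Finset.range 0, x (i + (j : ZMod (m+1)) + 1)) *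
      ∏ j ∈ Finset.Ico (0+1) (m+1), y (i + (j : ZMod (m+1)) + 1)) = ∏ j, y j := by
    rw [Finset.prod_range_zero, one_mul, Finset.prod_Ico_eq_prod_range]
    have : y (i+1) * ∏ l ∈ Finset.range ((m+1) - 1), y (i + ((1 + l : ℕ) : ZMod (m+1)) + 1)
        = ∏ l ∈ Finset.range (m+1), y ((i+1) + (l : ZMod (m+1))) := by
      rw [Finset.prod_range_succ']
      rw [mul_comm]
      congr 1
      · apply Finset.prod_congr rfl ?_
        intro l _
        congr 1
        push_cast
        ring
      · simp
    rw [this, prod_shift]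
  have bX : x (i+1) * ((∏ j ∈ Finset.range m, x ((i+1) + (j : ZMod (m+1)) + 1)) *
      ∏ j ∈ Finset.Ico (m+1) (m+1), y ((i+1) + (j : ZMod (m+1)) + 1)) = ∏ j, x j := by
    rw [Finset.Ico_self]
    rw [Finset.prod_empty, mul_one]
    have : x (i+1) * ∏ j ∈ Finset.range m, x ((i+1) + (j : ZMod (m+1)) + 1)
        = ∏ l ∈ Finset.range (m+1), x ((i+1) + (l : ZMod (m+1))) := by
      rw [Finset.prod_range_succ']
      rw [mul_comm]
      congr 1
      · apply Finset.prod_congr rfl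
        intro l _
        congr 1
        push_cast
        ring
      · simp
    rw [this, prod_shift]
  -- assemble
  unfold Qr
  rw [Finset.sum_range_succ, Finset.sum_range_succ' _ m, mul_add, mul_add,
    Finset.mul_sum, Finset.mul_sum, Finset.sum_congr rfl key, bY, bX]
  ring

section Parity
variable [NeZero n]

lemma val_succ_mod_two (hn : 1 < n) (hev : 2 ∣ n) (i : ZMod n) :
    (i + 1).val % 2 = (i.val + 1) % 2 := by
  haveI : Fact (1 < n) := ⟨hn⟩
  rw [ZMod.val_add, ZMod.val_one, Nat.mod_mod_of_dvd _ hev]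

variable (hn : 1 < n) (hev : 2 ∣ n)

lemma bar_even (i : ZMod n) (hi : i.val % 2 = 0) :
    (if i.val % 2 = 1 then i - 1 else i + 1) = i + 1 := by
  simp [hi]

lemma bar_odd (i : ZMod n) (hi : i.val % 2 = 1) :
    (if i.val % 2 = 1 then i - 1 else i + 1) = i - 1 := by
  simp [hi]

include hn hev in
lemma parity_succ_of_even (i : ZMod n) (hi : i.val % 2 = 0) : (i + 1).val % 2 = 1 := by
  rw [val_succ_mod_two hn hev]; omega

include hn hev in
lemma parity_succ_of_odd (i : ZMod n) (hi : i.val % 2 = 1) : (i + 1).val % 2 = 0 := by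
  rw [val_succ_mod_two hn hev]; omega

include hn hev in
lemma parity_pred_of_odd (i : ZMod n) (hi : i.val % 2 = 1) : (i - 1).val % 2 = 0 := by
  have := val_succ_mod_two hn hev (i - 1)
  rw [sub_add_cancel, hi] at this
  have h2 : (i - 1).val % 2 < 2 := Nat.mod_lt _ (by omega)
  omega

include hn hev in
lemma bar_involutive :
    Function.Involutive (fun i : ZMod n => if i.val % 2 = 1 then i - 1 else i + 1) := by
  intro i
  dsimp only
  rcases Nat.mod_two_eq_zero_or_one i.val with hi | hi
  · have h1 : ¬ (i.val % 2 = 1) := by omega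
    rw [if_neg h1, if_pos (parity_succ_of_even hn hev i hi), add_sub_cancel_right]
  · rw [if_pos hi, if_neg (by rw [parity_pred_of_odd hn hev i hi]; omega), sub_add_cancel]

end Parity

/-- the claimed value of `Qr xss yss` -/
noncomputable def qAux (x y : W n) (i : ZMod n) : ℝ :=
  if i.val % 2 = 1 then Qr x y i
  else (x (i + 1) + y i) * (x i * Qr x y (i + 1) + y (i + 1) * Qr x y (i - 1)) /
    ((x i + y (i + 1)) * (x (i + 2) + y (i + 3)))

theorem main_ne (n : ℕ) [NeZero n] (hn : 4 ≤ n) (hev : Even n) (x y : W n)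
    (hx : ∀ i, 0 < x i) (hy : ∀ i, 0 < y i)
    (bar : ZMod n → ZMod n) (hbar : bar = fun i => if i.val % 2 = 1 then i - 1 else i + 1)
    (α : ZMod n → ℝ) (hα : α = fun i => x i + y (bar i))
    (xss yss : W n)
    (hxss : xss = fun i => x (bar i) * α (bar i + 1) / α (bar i))
    (hyss : yss = fun i => y (bar i) * α (i + 1) / α i)
    (hXY : ∏ j, x j ≠ ∏ j, y j) :
    ∀ i : ZMod n, Qr xss yss i = qAux x y i := by
  have h1n : 1 < n := by omega
  have hdvd : 2 ∣ n := hev.two_dvd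
  -- pointwise facts
  have hbe : ∀ i : ZMod n, i.val % 2 = 0 → bar i = i + 1 := by
    intro i hi; rw [hbar]; simp [hi]
  have hbo : ∀ i : ZMod n, i.val % 2 = 1 → bar i = i - 1 := by
    intro i hi; rw [hbar]; simp [hi]
  have hbinv : ∀ i, bar (bar i) = i := by
    intro i; rw [hbar]; exact bar_involutive h1n hdvd i
  have hαpos : ∀ i, 0 < α i := by
    intro i; rw [hα]; exact add_pos (hx i) (hy _)
  have hαe : ∀ i : ZMod n, i.val % 2 = 0 → α i = x i + y (i + 1) := by
    intro i hi; rw [hα]; simp only; rw [hbe i hi]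
  have hαo : ∀ i : ZMod n, i.val % 2 = 1 → α i = x i + y (i - 1) := by
    intro i hi; rw [hα]; simp only; rw [hbo i hi]
  have hxss' : ∀ i, xss i = x (bar i) * α (bar i + 1) / α (bar i) := by
    intro i; rw [hxss]
  have hyss' : ∀ i, yss i = y (bar i) * α (i + 1) / α i := by
    intro i; rw [hyss]
  have hbbij : Function.Bijective bar := by
    rw [hbar]; exact (bar_involutive h1n hdvd).bijective
  have hαne : (∏ j, α j) ≠ 0 := ne_of_gt (Finset.prod_pos fun j _ => hαpos j)
  -- product invariance
  have hPα1 : ∏ j, α (bar j + 1) = ∏ j, α j :=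
    Function.Bijective.prod_comp ((Equiv.addRight (1 : ZMod n)).bijective.comp hbbij) α
  have hPα2 : ∏ j, α (bar j) = ∏ j, α j := Function.Bijective.prod_comp hbbij α
  have hPα3 : ∏ j, α (j + 1) = ∏ j, α j :=
    Function.Bijective.prod_comp (Equiv.addRight (1 : ZMod n)).bijective α
  have hPx : ∏ j, xss j = ∏ j, x j := by
    rw [hxss]
    rw [Finset.prod_div_distrib, Finset.prod_mul_distrib, hPα1, hPα2,
      Function.Bijective.prod_comp hbbij x, mul_div_assoc, div_self hαne, mul_one]
  have hPy : ∏ j, yss j = ∏ j, y j := by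
    rw [hyss]
    rw [Finset.prod_div_distrib, Finset.prod_mul_distrib, hPα3,
      Function.Bijective.prod_comp hbbij y, mul_div_assoc, div_self hαne, mul_one]
  -- the step identity
  have hstep : ∀ i : ZMod n, xss (i + 1) * qAux x y (i + 1) + ∏ j, y j
      = yss (i + 1) * qAux x y i + ∏ j, x j := by
    intro i
    rcases Nat.mod_two_eq_zero_or_one i.val with hi | hi
    · -- i even
      have hpi1 : (i + 1).val % 2 = 1 := parity_succ_of_even h1n hdvd i hi
      have hb1 : bar (i + 1) = i := by rw [hbo _ hpi1, add_sub_cancel_right]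
      have hα1 : α (i + 1) = x (i + 1) + y i := by
        rw [hαo _ hpi1, add_sub_cancel_right]
      have hα0 : α i = x i + y (i + 1) := hαe i hi
      have hx1 : xss (i + 1) = x i * α (i + 1) / α i := by rw [hxss' (i+1), hb1]
      have hy1 : yss (i + 1) = y i * α (i + 1 + 1) / α (i + 1) := by rw [hyss' (i+1), hb1]
      have hpi2 : (i + 1 + 1).val % 2 = 0 := parity_succ_of_odd h1n hdvd _ hpi1
      have e2 : i + 1 + 1 = i + 2 := by ring
      have e3 : i + 2 + 1 = i + 3 := by ring
      have hα2 : α (i + 1 + 1) = x (i + 2) + y (i + 3) := by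
        rw [hαe _ hpi2, e2, e3]
      have hq1 : qAux x y (i + 1) = Qr x y (i + 1) := by unfold qAux; rw [if_pos hpi1]
      have hq0 : qAux x y i = (x (i + 1) + y i) *
          (x i * Qr x y (i + 1) + y (i + 1) * Qr x y (i - 1)) /
          ((x i + y (i + 1)) * (x (i + 2) + y (i + 3))) := by
        unfold qAux; rw [if_neg (by omega)]
      have E1 := Qr_rec x y i
      have E2 := Qr_rec x y (i - 1)
      rw [sub_add_cancel] at E2
      have p0 : x i + y (i + 1) ≠ 0 := ne_of_gt (add_pos (hx _) (hy _))
      have p1 : x (i + 1) + y i ≠ 0 := ne_of_gt (add_pos (hx _) (hy _))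
      have p2 : x (i + 2) + y (i + 3) ≠ 0 := ne_of_gt (add_pos (hx _) (hy _))
      rw [hx1, hy1, hq1, hq0, hα1, hα0, hα2]
      field_simp
      linear_combination x i * E1 + y (i+1) * E2
    · -- i odd
      have hpi1 : (i + 1).val % 2 = 0 := parity_succ_of_odd h1n hdvd i hi
      have e2 : i + 1 + 1 = i + 2 := by ring
      have e3 : i + 2 + 1 = i + 3 := by ring
      have e4 : i + 3 + 1 = i + 4 := by ring
      have e0 : i + 1 - 1 = i := by ring
      have e3' : i + 1 + 2 = i + 3 := by ring
      have e4' : i + 1 + 3 = i + 4 := by ring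
      have hb1 : bar (i + 1) = i + 2 := by rw [hbe _ hpi1, e2]
      have hpi2 : (i + 2).val % 2 = 1 := by
        have := parity_succ_of_even h1n hdvd _ hpi1; rwa [e2] at this
      have hpi3 : (i + 3).val % 2 = 0 := by
        have := parity_succ_of_odd h1n hdvd _ hpi2; rwa [e3] at this
      have hα1 : α (i + 1) = x (i + 1) + y (i + 2) := by
        rw [hαe _ hpi1, e2]
      have hα2 : α (i + 2) = x (i + 2) + y (i + 1) := by
        rw [hαo _ hpi2]; congr 2; ring
      have hα3 : α (i + 3) = x (i + 3) + y (i + 4) := by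
        rw [hαe _ hpi3, e4]
      have hx1 : xss (i + 1) = x (i + 2) * α (i + 3) / α (i + 2) := by
        rw [hxss' (i+1), hb1, e3]
      have hy1 : yss (i + 1) = y (i + 2) * α (i + 2) / α (i + 1) := by
        rw [hyss' (i+1), hb1, e2]
      have hq0 : qAux x y i = Qr x y i := by unfold qAux; rw [if_pos hi]
      have hq1 : qAux x y (i + 1) = (x (i + 2) + y (i + 1)) *
          (x (i + 1) * Qr x y (i + 2) + y (i + 2) * Qr x y i) /
          ((x (i + 1) + y (i + 2)) * (x (i + 3) + y (i + 4))) := by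
        unfold qAux; rw [if_neg (by omega), e2, e0, e3', e4']
      have E1 := Qr_rec x y (i + 1)
      rw [e2] at E1
      have E2 := Qr_rec x y i
      have p1 : x (i + 1) + y (i + 2) ≠ 0 := ne_of_gt (add_pos (hx _) (hy _))
      have p2 : x (i + 2) + y (i + 1) ≠ 0 := ne_of_gt (add_pos (hx _) (hy _))
      have p3 : x (i + 3) + y (i + 4) ≠ 0 := ne_of_gt (add_pos (hx _) (hy _))
      rw [hx1, hy1, hq0, hq1, hα1, hα2, hα3]
      field_simp
      linear_combination x (i+1) * E1 + y (i+2) * E2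
  -- recursion for the transformed vectors
  have hrec' : ∀ i : ZMod n, xss (i + 1) * Qr xss yss (i + 1) + ∏ j, y j
      = yss (i + 1) * Qr xss yss i + ∏ j, x j := by
    intro i
    have h := Qr_rec xss yss i
    rw [hPx, hPy] at h
    exact h
  set d : ZMod n → ℝ := fun i => Qr xss yss i - qAux x y i with hd
  have hdrec : ∀ i, xss (i + 1) * d (i + 1) = yss (i + 1) * d i := by
    intro i
    simp only [hd]
    linear_combination hrec' i - hstep i
  have chain : ∀ k : ℕ, ∀ i : ZMod n,
      (∏ l ∈ Finset.range k, yss (i + l + 1)) * d i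
        = (∏ l ∈ Finset.range k, xss (i + l + 1)) * d (i + k) := by
    intro k
    induction k with
    | zero => intro i; simp
    | succ k ih =>
      intro i
      rw [Finset.prod_range_succ, Finset.prod_range_succ]
      have hc : (((k + 1 : ℕ)) : ZMod n) = (k : ZMod n) + 1 := by push_cast; ring
      rw [hc, ← add_assoc]
      linear_combination yss (i + k + 1) * ih i
        - (∏ l ∈ Finset.range k, xss (i + l + 1)) * hdrec (i + k)
  have hd0 : ∀ i, d i = 0 := by
    intro i
    have hc := chain n i
    rw [ZMod.natCast_self, add_zero] at hc
    have h1 : (∏ l ∈ Finset.range n, yss (i + l + 1)) = ∏ j, yss j := by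
      calc ∏ l ∈ Finset.range n, yss (i + l + 1)
          = ∏ l ∈ Finset.range n, yss ((i + 1) + l) :=
            Finset.prod_congr rfl (fun l _ => by congr 1; ring)
        _ = ∏ j, yss j := prod_shift _ _
    have h2 : (∏ l ∈ Finset.range n, xss (i + l + 1)) = ∏ j, xss j := by
      calc ∏ l ∈ Finset.range n, xss (i + l + 1)
          = ∏ l ∈ Finset.range n, xss ((i + 1) + l) :=
            Finset.prod_congr rfl (fun l _ => by congr 1; ring)
        _ = ∏ j, xss j := prod_shift _ _
    rw [h1, h2, hPx, hPy] at hc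
    by_contra h
    exact hXY (mul_right_cancel₀ h hc.symm)
  intro i
  have := hd0 i
  simp only [hd] at this
  linarith [this]

open Filter Topology in
lemma qr_tendsto {n : ℕ} (u v : ℝ → W n) (t0 : ℝ) (i : ZMod n)
    (hu : ∀ j, ContinuousAt (fun t => u t j) t0)
    (hv : ∀ j, ContinuousAt (fun t => v t j) t0) :
    ContinuousAt (fun t => Qr (u t) (v t) i) t0 := by
  unfold Qr ContinuousAt
  apply tendsto_finset_sum
  intro k _
  exact Filter.Tendsto.mul (tendsto_finset_prod _ fun j _ => hu _)
    (tendsto_finset_prod _ fun j _ => hv _)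

open Filter Topology in
theorem lemmaA3_aux (n : ℕ) [NeZero n] (hn : 4 ≤ n) (hev : Even n) (x y : W n)
    (hx : ∀ i, 0 < x i) (hy : ∀ i, 0 < y i)
    (bar : ZMod n → ZMod n) (hbar : bar = fun i => if i.val % 2 = 1 then i - 1 else i + 1)
    (α : ZMod n → ℝ) (hα : α = fun i => x i + y (bar i))
    (xss yss : W n)
    (hxss : xss = fun i => x (bar i) * α (bar i + 1) / α (bar i))
    (hyss : yss = fun i => y (bar i) * α (i + 1) / α i) :
    (∀ i : ZMod n, i.val % 2 = 1 → Qr xss yss i = Qr x y i) ∧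
      ∀ i : ZMod n, i.val % 2 = 0 →
        Qr xss yss i =
          (x (i + 1) + y i) * (x i * Qr x y (i + 1) + y (i + 1) * Qr x y (i - 1)) /
            ((x i + y (i + 1)) * (x (i + 2) + y (i + 3))) := by
  by_cases hXY : (∏ j, x j) = ∏ j, y j
  · -- degenerate case: perturb y by a factor t → 1⁺
    have hprodpos : 0 < ∏ j, x j := Finset.prod_pos fun j _ => hx j
    have hne : ∀ t : ℝ, 1 < t → (∏ j, x j) ≠ ∏ j, ((fun j => t * y j) j) := by
      intro t ht
      have hp : ∏ j : ZMod n, (t * y j) = t ^ n * ∏ j, y j := by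
        rw [Finset.prod_mul_distrib, Finset.prod_const, Finset.card_univ, ZMod.card]
      simp only [hp, ← hXY]
      have h1 : 1 < t ^ n := one_lt_pow₀ ht (by omega)
      nlinarith
    have key : ∀ t : ℝ, 1 < t → ∀ i : ZMod n,
        Qr (fun j => x (bar j) * (x (bar j + 1) + t * y (bar (bar j + 1))) /
              (x (bar j) + t * y (bar (bar j))))
           (fun j => t * y (bar j) * (x (j + 1) + t * y (bar (j + 1))) /
              (x j + t * y (bar j))) i
        = qAux x (fun j => t * y j) i := by
      intro t ht
      exact main_ne n hn hev x (fun j => t * y j) hx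
        (fun j => mul_pos (lt_trans one_pos ht) (hy j)) bar hbar
        (fun i => x i + t * y (bar i)) rfl
        (fun j => x (bar j) * (x (bar j + 1) + t * y (bar (bar j + 1))) /
          (x (bar j) + t * y (bar (bar j))))
        (fun j => t * y (bar j) * (x (j + 1) + t * y (bar (j + 1))) /
          (x j + t * y (bar j)))
        rfl rfl (hne t ht)
    -- the approximating sequence
    have hs : Tendsto (fun k : ℕ => 1 + 1/((k : ℝ) + 1)) atTop (𝓝 1) := by
      have h0 : Tendsto (fun k : ℕ => 1/((k : ℝ) + 1)) atTop (𝓝 0) :=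
        tendsto_one_div_add_atTop_nhds_zero_nat
      have := (tendsto_const_nhds : Tendsto (fun _ : ℕ => (1:ℝ)) atTop (𝓝 1)).add h0
      simpa using this
    have hs1 : ∀ k : ℕ, 1 < 1 + 1/((k : ℝ) + 1) := by
      intro k
      have : (0:ℝ) < 1/((k : ℝ) + 1) := by positivity
      linarith
    -- continuity of the transformed-side function of t
    have hAcont : ∀ c c' : ZMod n, ContinuousAt (fun t : ℝ => x c + t * y c') 1 :=
      fun c c' => continuousAt_const.add (continuousAt_id.mul continuousAt_const)
    have hApos : ∀ c c' : ZMod n, x c + 1 * y c' ≠ 0 :=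
      fun c c' => ne_of_gt (by rw [one_mul]; exact add_pos (hx _) (hy _))
    have hFcont : ∀ i : ZMod n, ContinuousAt (fun t : ℝ =>
        Qr (fun j => x (bar j) * (x (bar j + 1) + t * y (bar (bar j + 1))) /
              (x (bar j) + t * y (bar (bar j))))
           (fun j => t * y (bar j) * (x (j + 1) + t * y (bar (j + 1))) /
              (x j + t * y (bar j))) i) 1 := by
      intro i
      apply qr_tendsto
      · intro j
        exact (continuousAt_const.mul (hAcont _ _)).div (hAcont _ _) (hApos _ _)
      · intro j
        exact ((continuousAt_id.mul continuousAt_const).mul (hAcont _ _)).div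
          (hAcont _ _) (hApos _ _)
    -- identification of the value at t = 1
    have hxss1 : (fun j => x (bar j) * (x (bar j + 1) + 1 * y (bar (bar j + 1))) /
        (x (bar j) + 1 * y (bar (bar j)))) = xss := by
      funext j
      simp only [hxss, hα, one_mul]
    have hyss1 : (fun j => 1 * y (bar j) * (x (j + 1) + 1 * y (bar (j + 1))) /
        (x j + 1 * y (bar j))) = yss := by
      funext j
      simp only [hyss, hα, one_mul]
    have hy1 : (fun j => (1:ℝ) * y j) = y := funext fun j => one_mul _
    have hQcont : ∀ i : ZMod n, ContinuousAt (fun t : ℝ =>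
        Qr x (fun j => t * y j) i) 1 := by
      intro i
      exact qr_tendsto (fun _ => x) (fun t j => t * y j) 1 i
        (fun j => continuousAt_const) (fun j => continuousAt_id.mul continuousAt_const)
    have hFG_odd : ∀ i : ZMod n, i.val % 2 = 1 → ∀ t : ℝ, 1 < t →
        Qr (fun j => x (bar j) * (x (bar j + 1) + t * y (bar (bar j + 1))) /
              (x (bar j) + t * y (bar (bar j))))
           (fun j => t * y (bar j) * (x (j + 1) + t * y (bar (j + 1))) /
              (x j + t * y (bar j))) i
          = Qr x (fun j => t * y j) i := by
      intro i hi t ht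
      have h := key t ht i
      unfold qAux at h
      rw [if_pos hi] at h
      exact h
    have hFG_even : ∀ i : ZMod n, i.val % 2 = 0 → ∀ t : ℝ, 1 < t →
        Qr (fun j => x (bar j) * (x (bar j + 1) + t * y (bar (bar j + 1))) /
              (x (bar j) + t * y (bar (bar j))))
           (fun j => t * y (bar j) * (x (j + 1) + t * y (bar (j + 1))) /
              (x j + t * y (bar j))) i
          = (x (i + 1) + t * y i) *
              (x i * Qr x (fun j => t * y j) (i + 1) +
                t * y (i + 1) * Qr x (fun j => t * y j) (i - 1)) /
              ((x i + t * y (i + 1)) * (x (i + 2) + t * y (i + 3))) := by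
      intro i hi t ht
      have h := key t ht i
      unfold qAux at h
      rw [if_neg (by omega)] at h
      exact h
    constructor
    · -- odd indices
      intro i hi
      have A := (hFcont i).tendsto.comp hs
      have B := (hQcont i).tendsto.comp hs
      have A' := A.congr (fun k => hFG_odd i hi _ (hs1 k))
      have huniq := tendsto_nhds_unique A' B
      have hval : (fun t : ℝ => Qr x (fun j => t * y j) i) 1 = Qr x y i := by
        simp only [one_mul]
      rw [← hxss1, ← hyss1, ← hval]
      exact huniq
    · -- even indices
      intro i hi
      have hGecont : ContinuousAt (fun t : ℝ =>
          (x (i + 1) + t * y i) *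
            (x i * Qr x (fun j => t * y j) (i + 1) +
              t * y (i + 1) * Qr x (fun j => t * y j) (i - 1)) /
            ((x i + t * y (i + 1)) * (x (i + 2) + t * y (i + 3)))) 1 := by
        apply ContinuousAt.div
        · exact ((continuousAt_const.add (continuousAt_id.mul continuousAt_const)).mul
            ((continuousAt_const.mul (hQcont (i + 1))).add
              ((continuousAt_id.mul continuousAt_const).mul (hQcont (i - 1)))))
        · exact ((continuousAt_const.add (continuousAt_id.mul continuousAt_const)).mul
            (continuousAt_const.add (continuousAt_id.mul continuousAt_const)))
        · exact ne_of_gt (mul_pos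
            (by rw [one_mul]; exact add_pos (hx _) (hy _))
            (by rw [one_mul]; exact add_pos (hx _) (hy _)))
      have A := (hFcont i).tendsto.comp hs
      have B := hGecont.tendsto.comp hs
      have A' := A.congr (fun k => hFG_even i hi _ (hs1 k))
      have huniq := tendsto_nhds_unique A' B
      have hval : (fun t : ℝ =>
          (x (i + 1) + t * y i) *
            (x i * Qr x (fun j => t * y j) (i + 1) +
              t * y (i + 1) * Qr x (fun j => t * y j) (i - 1)) /
            ((x i + t * y (i + 1)) * (x (i + 2) + t * y (i + 3)))) 1
          = (x (i + 1) + y i) * (x i * Qr x y (i + 1) + y (i + 1) * Qr x y (i - 1)) /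
            ((x i + y (i + 1)) * (x (i + 2) + y (i + 3))) := by
        simp only [one_mul]
      rw [← hxss1, ← hyss1, ← hval]
      exact huniq
  · -- generic case
    have h := main_ne n hn hev x y hx hy bar hbar α hα xss yss hxss hyss hXY
    constructor
    · intro i hi
      rw [h i]
      unfold qAux
      rw [if_pos hi]
    · intro i hi
      rw [h i]
      unfold qAux
      rw [if_neg (by omega)]

/-- Lemma A.3, Switch₁ₙ case: let `n ≥ 4` be even and
`x, y ∈ (ℝ_{>0})^n`.  With the involution `ī` pairing `(n,1), (2,3), (4,5), …, (n−2,n−1)`,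
`α_i = x_i + y_ī`, `x**_i = x_ī·α_{ī+1}/α_ī` and `y**_i = y_ī·α_{i+1}/α_i`, one has
`Q_i(x**, y**) = Q_i(x,y)` for every odd `i`, and
`Q_i(x**, y**) = (x_{i+1}+y_i)·(x_i·Q_{i+1} + y_{i+1}·Q_{i−1}) / ((x_i+y_{i+1})·(x_{i+2}+y_{i+3}))`
for every even `i`. -/
theorem lemmaA3_switch1n (n : ℕ) (hn : 4 ≤ n) (hev : Even n) (x y : W n)
    (hx : ∀ i, 0 < x i) (hy : ∀ i, 0 < y i)
    (bar : ZMod n → ZMod n) (hbar : bar = fun i => if i.val % 2 = 1 then i - 1 else i + 1)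
    (α : ZMod n → ℝ) (hα : α = fun i => x i + y (bar i))
    (xss yss : W n)
    (hxss : xss = fun i => x (bar i) * α (bar i + 1) / α (bar i))
    (hyss : yss = fun i => y (bar i) * α (i + 1) / α i) :
    (∀ i : ZMod n, i.val % 2 = 1 → Qr xss yss i = Qr x y i) ∧
      ∀ i : ZMod n, i.val % 2 = 0 →
        Qr xss yss i =
          (x (i + 1) + y i) * (x i * Qr x y (i + 1) + y (i + 1) * Qr x y (i - 1)) /
            ((x i + y (i + 1)) * (x (i + 2) + y (i + 3))) := by
  haveI : NeZero n := ⟨by omega⟩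
  exact lemmaA3_aux n hn hev x y hx hy bar hbar α hα xss yss hxss hyss

end BBST
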